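/- Let n ≥ 1, λ ∈ (0, 2π/n), P, Q ∈ π_n(𝕋) with c_P ≠ c_Q, F := P − Q, S := P_+·Q_− − P_−·Q_+, and T := F_+·(F^{*n})_− − F_−·(F^{*n})_+. If F ∈ D_n(λ) \ T_n(λ), then each of S and T has exactly n−1 critical points (zeros of its derivative, counted with multiplicity) in the open unit disk 𝔻. -/

import Mathlib

open Polynomial Complex Finset
open scoped Classical

noncomputable section

/-- `uexp t = e^{it}`. -/
def uexp (t : ℝ) : ℂ := Complex.exp (Complex.I * t)

/-- Angular distance between two angles, measured on the circle `ℝ / 2πℤ`. -/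
def angDist (x y : ℝ) : ℝ := ‖((x - y : ℝ) : AddCircle (2 * Real.pi))‖

/-- `polyOn n Ω` : polynomials of degree exactly `n` with all zeros in `Ω`. -/
def polyOn (n : ℕ) (Ω : Set ℂ) : Set (Polynomial ℂ) :=
  {P | P.natDegree = n ∧ ∀ z : ℂ, P.IsRoot z → z ∈ Ω}

/-- `polyLe n Ω` : nonzero polynomials of degree at most `n` with all zeros in `Ω`. -/
def polyLe (n : ℕ) (Ω : Set ℂ) : Set (Polynomial ℂ) :=
  {P | P ≠ 0 ∧ P.natDegree ≤ n ∧ ∀ z : ℂ, P.IsRoot z → z ∈ Ω}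

/-- Suffridge's class `T̄_n(λ)`. -/
def Tbar (n : ℕ) (lam : ℝ) : Set (Polynomial ℂ) :=
  {P | ∃ (a : ℂ) (θ : Fin n → ℝ), a ≠ 0 ∧
    P = C a * ∏ j, (X - C (uexp (θ j))) ∧
    ∀ j k, j ≠ k → lam ≤ angDist (θ j) (θ k)}

/-- Suffridge's class `T_n(λ)`. -/
def Tstrict (n : ℕ) (lam : ℝ) : Set (Polynomial ℂ) :=
  {P | ∃ (a : ℂ) (θ : Fin n → ℝ), a ≠ 0 ∧
    P = C a * ∏ j, (X - C (uexp (θ j))) ∧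
    ∀ j k, j ≠ k → lam < angDist (θ j) (θ k)}

/-- The quantity `e^{-inλ/2} F₊(z)/F₋(z)`. -/
def dQuot (n : ℕ) (lam : ℝ) (F : Polynomial ℂ) (z : ℂ) : ℂ :=
  uexp (-(n * lam) / 2) * F.eval (uexp (lam / 2) * z) / F.eval (uexp (-(lam / 2)) * z)

/-- The class `D̄_n(λ)` for `λ ∈ [0, 2π/n]`. -/
def Dbar (n : ℕ) (lam : ℝ) : Set (Polynomial ℂ) :=
  if lam = 0 then polyOn n {z | ‖z‖ ≤ 1}
  else if lam = 2 * Real.pi / n then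
    {P | ∃ a b : ℂ, a ≠ 0 ∧ ‖b‖ ≤ 1 ∧ P = C a * (X ^ n - C b)}
  else {P | P.natDegree = n ∧ ∀ z : ℂ, 1 < ‖z‖ → 0 < (dQuot n lam P z).im}

/-- The class `D_n(λ)` for `λ ∈ [0, 2π/n)`. -/
def Dset (n : ℕ) (lam : ℝ) : Set (Polynomial ℂ) :=
  Tstrict n lam ∪
    (if lam = 0 then polyOn n {z | ‖z‖ < 1}
     else {P | P.natDegree = n ∧ ∀ z : ℂ, 1 ≤ ‖z‖ → 0 < (dQuot n lam P z).im})

/-- `Q_n(λ; z) = ∏_{j=1}^n (1 + e^{i(2j-n-1)λ/2} z)`. -/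
def Qpoly (n : ℕ) (lam : ℝ) : Polynomial ℂ :=
  ∏ j ∈ Finset.range n, (1 + C (uexp ((2 * (j : ℝ) + 1 - n) * lam / 2)) * X)

/-- The coefficients `C_k^{(n)}(λ)` of `Q_n(λ; ·)`. -/
def Ccoef (n k : ℕ) (lam : ℝ) : ℂ := (Qpoly n lam).coeff k

/-- The Suffridge convolution `F *_λ G` of two degree-`n` polynomials. -/
def lamConv (n : ℕ) (lam : ℝ) (F G : Polynomial ℂ) : Polynomial ℂ :=
  ∑ k ∈ Finset.range (n + 1), C (F.coeff k * G.coeff k / Ccoef n k lam) * X ^ k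

/-- `preOf n lam f = f * Q_n(λ;·) = ∑ C_k^{(n)}(λ) a_k z^k`; so `f` belongs to the
pre-coefficient class `P𝒞_n(λ)` iff `preOf n lam f ∈ 𝒞_n(λ)`. -/
def preOf (n : ℕ) (lam : ℝ) (f : Polynomial ℂ) : Polynomial ℂ :=
  ∑ k ∈ Finset.range (n + 1), C (Ccoef n k lam * f.coeff k) * X ^ k

/-- Pre-extremal polynomials `a ∑_{k=0}^n b^k z^k`, `a ≠ 0`, `|b| = 1`. -/
def PreExtremal (n : ℕ) (f : Polynomial ℂ) : Prop :=
  ∃ a b : ℂ, a ≠ 0 ∧ ‖b‖ = 1 ∧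
    f = C a * ∑ k ∈ Finset.range (n + 1), C (b ^ k) * X ^ k

/-- The `n`-inverse `F^{*n}(z) = z^n conj (F (1/ conj z))`. -/
def nInv (n : ℕ) (F : Polynomial ℂ) : Polynomial ℂ :=
  (F.reflect n).map (starRingEnd ℂ)

/-- `F₊(z) = F(e^{iλ/2} z)` as a polynomial. -/
def plusPoly (lam : ℝ) (F : Polynomial ℂ) : Polynomial ℂ :=
  F.comp (C (uexp (lam / 2)) * X)

/-- `F₋(z) = F(e^{-iλ/2} z)` as a polynomial. -/
def minusPoly (lam : ℝ) (F : Polynomial ℂ) : Polynomial ℂ :=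
  F.comp (C (uexp (-(lam / 2))) * X)

/-- The operator `Δ_λ^n[F](z) = (F₊(z) - F₋(z)) / (2 i z sin(nλ/2))`, with
`Δ_0^n[F] = F'/n`. -/
def Delta (n : ℕ) (lam : ℝ) (F : Polynomial ℂ) : Polynomial ℂ :=
  if lam = 0 then C ((n : ℂ)⁻¹) * derivative F
  else C ((2 * Complex.I * (Real.sin (n * lam / 2) : ℂ))⁻¹) *
    (plusPoly lam F - minusPoly lam F).divX

/-- `P` and `Q` (of degree `n`, zeros on the unit circle) have strictly interspersed
zeros: they are coprime and their zeros alternate on the unit circle. -/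
def StrictIntersp (n : ℕ) (P Q : Polynomial ℂ) : Prop :=
  IsCoprime P Q ∧ ∃ (a b : ℂ) (θ φ : ℕ → ℝ), a ≠ 0 ∧ b ≠ 0 ∧
    P = C a * ∏ j ∈ Finset.range n, (X - C (uexp (θ j))) ∧
    Q = C b * ∏ j ∈ Finset.range n, (X - C (uexp (φ j))) ∧
    (∀ j, j < n → θ j < φ j) ∧
    (∀ j, j + 1 < n → φ j < θ (j + 1)) ∧
    (0 < n → φ (n - 1) < θ 0 + 2 * Real.pi)

/-- The Grace–Szegő convolution of two polynomials of degree ≤ n. -/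
def GSconv (n : ℕ) (F G : Polynomial ℂ) : Polynomial ℂ :=
  ∑ k ∈ Finset.range (n + 1), C (F.coeff k * G.coeff k / (n.choose k : ℂ)) * X ^ k

/-- `Ω_{τ,γ}` : the image of the unit disk under `z ↦ τz/(1+γz)`. -/
def OmegaSet (τ : ℂ) (γ : ℝ) : Set ℂ :=
  (fun z => τ * z / (1 + (γ : ℂ) * z)) '' Metric.ball 0 1

/-- `I_γ = {z : |z| + γ|1+z| < 1}`. -/
def Iset (γ : ℝ) : Set ℂ := {z | ‖z‖ + γ * ‖1 + z‖ < 1}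

/-- `O_γ = {z : |z| - γ|1+z| > 1}`. -/
def Oset (γ : ℝ) : Set ℂ := {z | 1 < ‖z‖ - γ * ‖1 + z‖}

end

noncomputable section

namespace Stmt13Aux

open Polynomial Complex

local notation "conj'" => starRingEnd ℂ

lemma uexp_ne_zero (t : ℝ) : uexp t ≠ 0 := Complex.exp_ne_zero _

lemma conj_uexp (t : ℝ) : conj' (uexp t) = uexp (-t) := by
  rw [uexp, uexp, ← Complex.exp_conj]
  congr 1
  simp [Complex.conj_I]

lemma uexp_mul_uexp (s t : ℝ) : uexp s * uexp t = uexp (s + t) := by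
  rw [uexp, uexp, uexp, ← Complex.exp_add]
  congr 1
  push_cast
  ring

lemma uexp_pow (t : ℝ) (k : ℕ) : uexp t ^ k = uexp (k * t) := by
  rw [uexp, uexp, ← Complex.exp_nat_mul]
  congr 1
  push_cast
  ring

lemma uexp_mul_conj (t : ℝ) : uexp t * conj' (uexp t) = 1 := by
  rw [conj_uexp, uexp_mul_uexp]
  simp [uexp]

lemma abs_uexp (t : ℝ) : ‖uexp t‖ = 1 := by
  rw [uexp]
  rw [Complex.norm_exp]
  simp

/-- coefficient of `p.comp (C u * X)` -/
lemma coeff_comp_C_mul_X (p : Polynomial ℂ) (u : ℂ) (k : ℕ) :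
    (p.comp (C u * X)).coeff k = u ^ k * p.coeff k := by
  induction p using Polynomial.induction_on' with
  | add p q hp hq => simp [add_comp, hp, hq, mul_add]
  | monomial j a =>
    rw [monomial_comp, mul_pow, ← C_pow]
    simp only [coeff_C_mul, coeff_monomial, coeff_X_pow]
    rcases eq_or_ne j k with h | h
    · simp [h, mul_comm]
    · simp [h, Ne.symm h]

lemma coeff_nInv (N : ℕ) (p : Polynomial ℂ) (k : ℕ) :
    (nInv N p).coeff k = conj' (p.coeff (Polynomial.revAt N k)) := by
  rw [nInv, Polynomial.coeff_map, Polynomial.coeff_reflect]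

lemma nInv_sub (N : ℕ) (p q : Polynomial ℂ) :
    nInv N (p - q) = nInv N p - nInv N q := by
  ext k
  simp [coeff_nInv, Polynomial.coeff_sub]

lemma nInv_C_mul (N : ℕ) (a : ℂ) (p : Polynomial ℂ) :
    nInv N (C a * p) = C (conj' a) * nInv N p := by
  ext k
  simp [coeff_nInv, Polynomial.coeff_C_mul]

lemma natDegree_nInv_le (N : ℕ) (p : Polynomial ℂ) (hp : p.natDegree ≤ N) :
    (nInv N p).natDegree ≤ N := by
  apply Polynomial.natDegree_le_iff_coeff_eq_zero.2
  intro k hk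
  rw [coeff_nInv]
  have h1 : Polynomial.revAt N k = k := Polynomial.revAt_eq_self_of_lt hk
  rw [h1]
  rw [Polynomial.coeff_eq_zero_of_natDegree_lt (lt_of_le_of_lt hp hk)]
  simp

lemma plusPoly_coeff (lam : ℝ) (p : Polynomial ℂ) (k : ℕ) :
    (plusPoly lam p).coeff k = uexp (lam / 2) ^ k * p.coeff k :=
  coeff_comp_C_mul_X p _ k

lemma minusPoly_coeff (lam : ℝ) (p : Polynomial ℂ) (k : ℕ) :
    (minusPoly lam p).coeff k = uexp (-(lam / 2)) ^ k * p.coeff k :=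
  coeff_comp_C_mul_X p _ k

lemma plusPoly_natDegree_le (lam : ℝ) (p : Polynomial ℂ) :
    (plusPoly lam p).natDegree ≤ p.natDegree := by
  apply Polynomial.natDegree_le_iff_coeff_eq_zero.2
  intro k hk
  rw [plusPoly_coeff, Polynomial.coeff_eq_zero_of_natDegree_lt hk, mul_zero]

lemma minusPoly_natDegree_le (lam : ℝ) (p : Polynomial ℂ) :
    (minusPoly lam p).natDegree ≤ p.natDegree := by
  apply Polynomial.natDegree_le_iff_coeff_eq_zero.2
  intro k hk
  rw [minusPoly_coeff, Polynomial.coeff_eq_zero_of_natDegree_lt hk, mul_zero]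

lemma plusPoly_eval (lam : ℝ) (p : Polynomial ℂ) (z : ℂ) :
    (plusPoly lam p).eval z = p.eval (uexp (lam / 2) * z) := by
  simp [plusPoly, Polynomial.eval_comp]

lemma minusPoly_eval (lam : ℝ) (p : Polynomial ℂ) (z : ℂ) :
    (minusPoly lam p).eval z = p.eval (uexp (-(lam / 2)) * z) := by
  simp [minusPoly, Polynomial.eval_comp]

lemma plusPoly_sub (lam : ℝ) (p q : Polynomial ℂ) :
    plusPoly lam (p - q) = plusPoly lam p - plusPoly lam q := Polynomial.sub_comp

lemma minusPoly_sub (lam : ℝ) (p q : Polynomial ℂ) :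
    minusPoly lam (p - q) = minusPoly lam p - minusPoly lam q := Polynomial.sub_comp

lemma plusPoly_C_mul (lam : ℝ) (a : ℂ) (p : Polynomial ℂ) :
    plusPoly lam (C a * p) = C a * plusPoly lam p := by
  simp [plusPoly, Polynomial.mul_comp]

lemma minusPoly_C_mul (lam : ℝ) (a : ℂ) (p : Polynomial ℂ) :
    minusPoly lam (C a * p) = C a * minusPoly lam p := by
  simp [minusPoly, Polynomial.mul_comp]

/-- `nInv N` on `plusPoly`. -/
lemma nInv_plusPoly (N : ℕ) (lam : ℝ) (p : Polynomial ℂ) (hp : p.natDegree ≤ N) :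
    nInv N (plusPoly lam p) = C (uexp (-(lam / 2)) ^ N) * plusPoly lam (nInv N p) := by
  ext k
  rw [coeff_nInv, Polynomial.coeff_C_mul, plusPoly_coeff, plusPoly_coeff, coeff_nInv]
  rcases le_or_gt k N with h | h
  · rw [Polynomial.revAt_le h]
    rw [map_mul, map_pow, conj_uexp]
    have e1 : uexp (-(lam / 2)) ^ (N - k) * (uexp (lam / 2) ^ k * uexp (-(lam / 2)) ^ k)
        = uexp (-(lam / 2)) ^ (N - k) := by
      simp only [uexp_pow, uexp_mul_uexp]
      congr 1
      push_cast
      ring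
    calc uexp (-(lam / 2)) ^ (N - k) * conj' (p.coeff (N - k))
        = uexp (-(lam / 2)) ^ (N - k) * (uexp (lam / 2) ^ k * uexp (-(lam / 2)) ^ k)
          * conj' (p.coeff (N - k)) := by rw [e1]
      _ = uexp (-(lam / 2)) ^ N * (uexp (lam / 2) ^ k * conj' (p.coeff (N - k))) := by
          rw [show uexp (-(lam / 2)) ^ (N - k) * (uexp (lam / 2) ^ k * uexp (-(lam / 2)) ^ k)
              = (uexp (-(lam / 2)) ^ (N - k) * uexp (-(lam / 2)) ^ k) * uexp (lam / 2) ^ k by ring,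
            ← pow_add, Nat.sub_add_cancel h]
          ring
  · have h1 : Polynomial.revAt N k = k := Polynomial.revAt_eq_self_of_lt h
    rw [h1]
    have h2 : p.coeff k = 0 := Polynomial.coeff_eq_zero_of_natDegree_lt (lt_of_le_of_lt hp h)
    rw [h2]
    simp

lemma nInv_minusPoly (N : ℕ) (lam : ℝ) (p : Polynomial ℂ) (hp : p.natDegree ≤ N) :
    nInv N (minusPoly lam p) = C (uexp (lam / 2) ^ N) * minusPoly lam (nInv N p) := by
  have := nInv_plusPoly N (-lam) p hp
  have e : -lam / 2 = -(lam / 2) := by ring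
  have e2 : -(-lam / 2) = lam / 2 := by ring
  rw [show plusPoly (-lam) = minusPoly lam by
        funext q; rw [plusPoly, minusPoly, e],
      e2] at this
  exact this

lemma nInv_mul (M N : ℕ) (p q : Polynomial ℂ) (hp : p.natDegree ≤ M) (hq : q.natDegree ≤ N) :
    nInv (M + N) (p * q) = nInv M p * nInv N q := by
  rw [nInv, nInv, nInv, Polynomial.reflect_mul p q hp hq, Polynomial.map_mul]

/-- Evaluation of the `n`-inverse on the unit circle. -/
lemma nInv_eval_circle (N : ℕ) (p : Polynomial ℂ) (hp : p.natDegree ≤ N) (z : ℂ)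
    (hz : z * conj' z = 1) :
    (nInv N p).eval z = z ^ N * conj' (p.eval z) := by
  have hd : (nInv N p).natDegree < N + 1 := Nat.lt_succ_of_le (natDegree_nInv_le N p hp)
  have hd2 : p.natDegree < N + 1 := Nat.lt_succ_of_le hp
  rw [Polynomial.eval_eq_sum_range' hd, Polynomial.eval_eq_sum_range' hd2]
  calc ∑ k ∈ Finset.range (N + 1), (nInv N p).coeff k * z ^ k
      = ∑ k ∈ Finset.range (N + 1), conj' (p.coeff (N - k)) * z ^ k := by
        apply Finset.sum_congr rfl
        intro k hk
        rw [coeff_nInv, Polynomial.revAt_le (Nat.lt_succ_iff.mp (Finset.mem_range.mp hk))]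
    _ = ∑ k ∈ Finset.range (N + 1), conj' (p.coeff (N - (N - k))) * z ^ (N - k) :=
        (Finset.sum_range_reflect (fun k => conj' (p.coeff (N - k)) * z ^ k) (N + 1)).symm
    _ = z ^ N * conj' (∑ k ∈ Finset.range (N + 1), p.coeff k * z ^ k) := by
        rw [map_sum, Finset.mul_sum]
        apply Finset.sum_congr rfl
        intro k hk
        have hkN : k ≤ N := Nat.lt_succ_iff.mp (Finset.mem_range.mp hk)
        rw [Nat.sub_sub_self hkN, map_mul, map_pow]
        have hzN : z ^ N = z ^ (N - k) * z ^ k := by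
          rw [← pow_add, Nat.sub_add_cancel hkN]
        rw [hzN]
        have : z ^ k * conj' z ^ k = 1 := by rw [← mul_pow, hz, one_pow]
        calc conj' (p.coeff k) * z ^ (N - k)
            = z ^ (N - k) * (z ^ k * conj' z ^ k) * conj' (p.coeff k) := by rw [this]; ring
          _ = z ^ (N - k) * z ^ k * (conj' (p.coeff k) * conj' z ^ k) := by ring

/-- The polynomial `T` in terms of `S`. -/
lemma T_eq_lemma (lam : ℝ) (a b : ℂ) (P Q : Polynomial ℂ) :
    plusPoly lam (P - Q) * minusPoly lam (C a * P - C b * Q) -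
      minusPoly lam (P - Q) * plusPoly lam (C a * P - C b * Q)
    = C (a - b) * (plusPoly lam P * minusPoly lam Q - minusPoly lam P * plusPoly lam Q) := by
  simp only [plusPoly_sub, minusPoly_sub, plusPoly_C_mul, minusPoly_C_mul, map_sub]
  ring

lemma huu_one (lam : ℝ) (n : ℕ) : uexp (-(lam / 2)) ^ n * uexp (lam / 2) ^ n = 1 := by
  simp only [uexp_pow, uexp_mul_uexp]
  rw [show (n : ℝ) * -(lam / 2) + n * (lam / 2) = 0 by ring]
  simp [uexp]

/-- Symmetry of `S`. -/
lemma S_sym (n : ℕ) (lam : ℝ) (P Q : Polynomial ℂ) (hP : P.natDegree ≤ n)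
    (hQ : Q.natDegree ≤ n) (a b : ℂ) (ha : nInv n P = C a * P) (hb : nInv n Q = C b * Q) :
    nInv (2 * n) (plusPoly lam P * minusPoly lam Q - minusPoly lam P * plusPoly lam Q)
      = C (a * b) *
        (plusPoly lam P * minusPoly lam Q - minusPoly lam P * plusPoly lam Q) := by
  have hPp := le_trans (plusPoly_natDegree_le lam P) hP
  have hPm := le_trans (minusPoly_natDegree_le lam P) hP
  have hQp := le_trans (plusPoly_natDegree_le lam Q) hQ
  have hQm := le_trans (minusPoly_natDegree_le lam Q) hQ
  rw [nInv_sub, two_mul, nInv_mul n n _ _ hPp hQm, nInv_mul n n _ _ hPm hQp,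
    nInv_plusPoly n lam P hP, nInv_minusPoly n lam Q hQ,
    nInv_minusPoly n lam P hP, nInv_plusPoly n lam Q hQ,
    ha, hb, plusPoly_C_mul, minusPoly_C_mul, plusPoly_C_mul, minusPoly_C_mul]
  have key : ∀ A B : Polynomial ℂ,
      C (uexp (-(lam / 2)) ^ n) * (C a * A) * (C (uexp (lam / 2) ^ n) * (C b * B))
        = C (uexp (-(lam / 2)) ^ n * uexp (lam / 2) ^ n) * (C (a * b) * (A * B)) := by
    intro A B
    simp only [map_mul]
    ring
  rw [key, huu_one lam n, map_one, one_mul]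
  rw [show C (uexp (lam / 2) ^ n) * (C a * minusPoly lam P) *
      (C (uexp (-(lam / 2)) ^ n) * (C b * plusPoly lam Q))
      = C (uexp (-(lam / 2)) ^ n * uexp (lam / 2) ^ n) *
        (C (a * b) * (minusPoly lam P * plusPoly lam Q)) by simp only [map_mul]; ring,
    huu_one lam n, map_one, one_mul, mul_sub]

lemma reflect_one_X_sub_C (w : ℂ) : Polynomial.reflect 1 ((X : Polynomial ℂ) - C w)
    = 1 - C w * X := by
  have h1 : Polynomial.reflect 1 ((X : Polynomial ℂ) - C w)
      = Polynomial.reflect 1 (X : Polynomial ℂ) - Polynomial.reflect 1 (C w : Polynomial ℂ) := by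
    ext k
    simp [Polynomial.coeff_reflect]
  rw [h1]
  have h2 : Polynomial.reflect 1 (X : Polynomial ℂ) = 1 := by
    rw [← pow_one (X : Polynomial ℂ), Polynomial.reflect_monomial]
    norm_num
  have h3 : Polynomial.reflect 1 (C w : Polynomial ℂ) = C w * X := by
    rw [show (C w : Polynomial ℂ) = C w * X ^ 0 by simp, Polynomial.reflect_C_mul_X_pow]
    norm_num
  rw [h2, h3]

lemma reflect_pow_X_sub_C (w : ℂ) (k : ℕ) :
    Polynomial.reflect k (((X : Polynomial ℂ) - C w) ^ k) = (1 - C w * X) ^ k := by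
  induction k with
  | zero =>
    rw [pow_zero, pow_zero, show (1 : Polynomial ℂ) = X ^ 0 by simp,
      Polynomial.reflect_monomial]
    norm_num
  | succ k ih =>
    have hdf : (((X : Polynomial ℂ) - C w) ^ k).natDegree ≤ k := by
      refine le_trans (Polynomial.natDegree_pow_le) ?_
      rw [Polynomial.natDegree_X_sub_C, mul_one]
    have hdg : ((X : Polynomial ℂ) - C w).natDegree ≤ 1 := by
      rw [Polynomial.natDegree_X_sub_C]
    calc Polynomial.reflect (k + 1) (((X : Polynomial ℂ) - C w) ^ (k + 1))
        = Polynomial.reflect (k + 1) ((((X : Polynomial ℂ) - C w) ^ k) * (X - C w)) := by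
          rw [pow_succ]
      _ = Polynomial.reflect k (((X : Polynomial ℂ) - C w) ^ k) *
          Polynomial.reflect 1 ((X : Polynomial ℂ) - C w) :=
          Polynomial.reflect_mul _ _ hdf hdg
      _ = (1 - C w * X) ^ (k + 1) := by rw [ih, reflect_one_X_sub_C, pow_succ]

lemma rootMultiplicity_inv_le (S : Polynomial ℂ) (hS0 : S ≠ 0) (N : ℕ)
    (hdeg : S.natDegree ≤ N) (ω : ℂ) (hω : ω ≠ 0) (hSym : nInv N S = C ω * S)
    (w : ℂ) (hw : w ≠ 0) :
    Polynomial.rootMultiplicity w S ≤ Polynomial.rootMultiplicity ((conj' w)⁻¹) S := by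
  set k := Polynomial.rootMultiplicity w S with hk
  obtain ⟨q, hq⟩ := Polynomial.pow_rootMultiplicity_dvd S w
  have hq0 : q ≠ 0 := by
    rintro rfl
    rw [mul_zero] at hq
    exact hS0 hq
  have hdq : S.natDegree = k + q.natDegree := by
    rw [hq, Polynomial.natDegree_mul (pow_ne_zero _ (Polynomial.X_sub_C_ne_zero w)) hq0,
      Polynomial.natDegree_pow, Polynomial.natDegree_X_sub_C, mul_one]
  have hqN : q.natDegree ≤ N - k := by omega
  have hdf : (((X : Polynomial ℂ) - C w) ^ k).natDegree ≤ k := by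
    refine le_trans (Polynomial.natDegree_pow_le) ?_
    rw [Polynomial.natDegree_X_sub_C, mul_one]
  have h1 : Polynomial.reflect N S
      = Polynomial.reflect k (((X : Polynomial ℂ) - C w) ^ k) *
        Polynomial.reflect (N - k) q := by
    calc Polynomial.reflect N S
        = Polynomial.reflect (k + (N - k)) ((((X : Polynomial ℂ) - C w) ^ k) * q) := by
          rw [← hq]
          congr 1
          omega
      _ = _ := Polynomial.reflect_mul _ _ hdf hqN
  have hcw : conj' w ≠ 0 := by simpa using hw
  have h2 : nInv N S = ((1 - C (conj' w) * X) ^ k) * nInv (N - k) q := by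
    rw [nInv, h1, Polynomial.map_mul, reflect_pow_X_sub_C, Polynomial.map_pow]
    rw [show ((1 - C w * X : Polynomial ℂ)).map (starRingEnd ℂ)
        = 1 - C (conj' w) * X by simp]
    rfl
  have hfac : (1 - C (conj' w) * X : Polynomial ℂ)
      = C (-(conj' w)) * (X - C ((conj' w)⁻¹)) := by
    rw [map_neg, neg_mul, mul_sub, ← Polynomial.C_mul, mul_inv_cancel₀ hcw, Polynomial.C_1]
    ring
  have hdvd1 : (X - C ((conj' w)⁻¹)) ^ k ∣ nInv N S := by
    rw [h2, hfac, mul_pow]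
    exact ⟨C (-(conj' w)) ^ k * nInv (N - k) q, by ring⟩
  rw [hSym] at hdvd1
  have hu : IsUnit (C ω : Polynomial ℂ) := Polynomial.isUnit_C.mpr hω.isUnit
  have hdvd : (X - C ((conj' w)⁻¹)) ^ k ∣ S := (hu.dvd_mul_left).mp hdvd1
  exact (Polynomial.le_rootMultiplicity_iff hS0).mpr hdvd

lemma rootMultiplicity_inv_eq (S : Polynomial ℂ) (hS0 : S ≠ 0) (N : ℕ)
    (hdeg : S.natDegree ≤ N) (ω : ℂ) (hω : ω ≠ 0) (hSym : nInv N S = C ω * S)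
    (w : ℂ) (hw : w ≠ 0) :
    Polynomial.rootMultiplicity w S = Polynomial.rootMultiplicity ((conj' w)⁻¹) S := by
  refine le_antisymm (rootMultiplicity_inv_le S hS0 N hdeg ω hω hSym w hw) ?_
  have hw2 : (conj' w)⁻¹ ≠ 0 := by simpa using hw
  have h := rootMultiplicity_inv_le S hS0 N hdeg ω hω hSym ((conj' w)⁻¹) hw2
  rwa [show (conj' ((conj' w)⁻¹))⁻¹ = w by simp [map_inv₀]] at h

/-- The key self-inversive derivative identity. -/
lemma nInv_derivative (n : ℕ) (hn : 1 ≤ n) (S : Polynomial ℂ) (ω : ℂ)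
    (hdeg : S.natDegree ≤ 2 * n) (hSym : nInv (2 * n) S = C ω * S) :
    nInv (2 * n - 1) (Polynomial.derivative S)
      = C ω * (C ((2 * n : ℕ) : ℂ) * S - X * Polynomial.derivative S) := by
  have hco : ∀ k, k ≤ 2 * n → conj' (S.coeff (2 * n - k)) = ω * S.coeff k := by
    intro k hk
    have h := congrArg (fun p : Polynomial ℂ => p.coeff k) hSym
    simpa [coeff_nInv, Polynomial.revAt_le hk, Polynomial.coeff_C_mul] using h
  ext k
  rw [coeff_nInv, Polynomial.coeff_C_mul, Polynomial.coeff_sub, Polynomial.coeff_C_mul]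
  rcases Nat.lt_or_ge k (2 * n) with hk | hk
  · have hk1 : k ≤ 2 * n - 1 := by omega
    rw [Polynomial.revAt_le hk1, Polynomial.coeff_derivative]
    rw [show 2 * n - 1 - k + 1 = 2 * n - k by omega]
    rw [map_mul]
    have e3 : conj' ((((2 * n - 1 - k : ℕ) : ℂ)) + 1) = (((2 * n - k : ℕ) : ℂ)) := by
      rw [map_add, map_one, map_natCast]
      rw [show ((2 * n - 1 - k : ℕ) : ℂ) + 1 = (((2 * n - 1 - k) + 1 : ℕ) : ℂ) by push_cast; ring]
      congr 1
      omega
    rw [e3, hco k (le_of_lt hk)]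
    rcases k with _ | k'
    · rw [Polynomial.mul_coeff_zero, Polynomial.coeff_X_zero, zero_mul]
      rw [show ((2 * n - 0 : ℕ) : ℂ) = ((2 * n : ℕ) : ℂ) by norm_num]
      ring
    · rw [Polynomial.coeff_X_mul, Polynomial.coeff_derivative]
      have e4 : ((2 * n - (k' + 1) : ℕ) : ℂ) = ((2 * n : ℕ) : ℂ) - ((k' + 1 : ℕ) : ℂ) := by
        have : (k' + 1) ≤ 2 * n := le_of_lt hk
        push_cast [Nat.cast_sub this]
        ring
      rw [e4]
      push_cast
      ring
  · obtain ⟨j, hj⟩ : ∃ j, k = j + 1 := ⟨k - 1, by omega⟩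
    subst hj
    rw [Polynomial.revAt_eq_self_of_lt (by omega), Polynomial.coeff_derivative,
      Polynomial.coeff_eq_zero_of_natDegree_lt (show S.natDegree < j + 1 + 1 by omega),
      zero_mul, map_zero, Polynomial.coeff_X_mul, Polynomial.coeff_derivative]
    rcases Nat.eq_or_lt_of_le hk with he | hlt
    · rw [show ((j : ℂ) + 1) = ((2 * n : ℕ) : ℂ) by rw [he]; push_cast; ring]
      ring
    · rw [Polynomial.coeff_eq_zero_of_natDegree_lt (show S.natDegree < j + 1 by omega)]
      ring

/-! ### Argument principle machinery -/

lemma eval_derivative_multisetProd (t : Multiset ℂ) (z : ℂ) (hz : ∀ r ∈ t, z ≠ r) :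
    Polynomial.eval z (Polynomial.derivative (t.map (fun a => X - C a)).prod)
      = ((t.map (fun r => (z - r)⁻¹)).sum) *
        Polynomial.eval z ((t.map (fun a => X - C a)).prod) := by
  induction t using Multiset.induction with
  | empty => simp
  | cons a s ih =>
    have hza : z - a ≠ 0 := sub_ne_zero.2 (hz a (Multiset.mem_cons_self a s))
    have ihs := ih (fun r hr => hz r (Multiset.mem_cons_of_mem hr))
    simp only [Multiset.map_cons, Multiset.prod_cons, Multiset.sum_cons, derivative_mul,
      Polynomial.eval_add, Polynomial.eval_mul, Polynomial.eval_sub, Polynomial.eval_X,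
      Polynomial.eval_C, Polynomial.derivative_sub, Polynomial.derivative_X,
      Polynomial.derivative_C, Polynomial.eval_one, Polynomial.eval_zero, ihs]
    field_simp
    ring

lemma eval_derivative_of_roots (p : Polynomial ℂ) (hp : p ≠ 0) (z : ℂ)
    (hz : p.eval z ≠ 0) :
    p.derivative.eval z = ((p.roots.map (fun r => (z - r)⁻¹)).sum) * p.eval z := by
  have hroots : Multiset.card p.roots = p.natDegree :=
    (Polynomial.splits_iff_card_roots.mp (IsAlgClosed.splits p))
  have hfac := Polynomial.C_leadingCoeff_mul_prod_multiset_X_sub_C (p := p) hroots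
  have hzr : ∀ r ∈ p.roots, z ≠ r := by
    intro r hr he
    subst he
    exact hz (Polynomial.isRoot_of_mem_roots hr)
  have hd : p.derivative.eval z = p.leadingCoeff *
      Polynomial.eval z (Polynomial.derivative ((p.roots.map (fun a => X - C a)).prod)) := by
    conv_lhs => rw [← hfac]
    rw [Polynomial.derivative_C_mul, Polynomial.eval_C_mul]
  have he : p.eval z = p.leadingCoeff *
      Polynomial.eval z ((p.roots.map (fun a => X - C a)).prod) := by
    conv_lhs => rw [← hfac]
    rw [Polynomial.eval_C_mul]
  rw [hd, he, eval_derivative_multisetProd _ _ hzr]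
  ring

lemma contOn_sum_inv (s : Multiset ℂ) (hs : ∀ r ∈ s, ‖r‖ ≠ 1) :
    ContinuousOn (fun z => ((s.map fun r => (z - r)⁻¹)).sum) (Metric.sphere (0:ℂ) 1) := by
  induction s using Multiset.induction with
  | empty => simp [continuousOn_const]
  | cons a t ih =>
    simp only [Multiset.map_cons, Multiset.sum_cons]
    apply ContinuousOn.add
    · apply ContinuousOn.inv₀ (continuousOn_id.sub continuousOn_const)
      intro z hz h
      have hz1 : ‖z‖ = 1 := by
        rwa [mem_sphere_zero_iff_norm] at hz
      have : z = a := sub_eq_zero.mp h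
      exact hs a (Multiset.mem_cons_self a t) (this ▸ hz1)
    · exact ih (fun r hr => hs r (Multiset.mem_cons_of_mem hr))

lemma circleIntegral_add' (f g : ℂ → ℂ) (hf : CircleIntegrable f 0 1)
    (hg : CircleIntegrable g 0 1) :
    (∮ z in C((0:ℂ), 1), (f z + g z))
      = (∮ z in C((0:ℂ), 1), f z) + ∮ z in C((0:ℂ), 1), g z := by
  simp only [circleIntegral, smul_add, intervalIntegral.integral_add hf.out hg.out]

lemma circleIntegrable_inv_off (a : ℂ) (ha : ‖a‖ ≠ 1) :
    CircleIntegrable (fun z : ℂ => (z - a)⁻¹) 0 1 := by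
  apply ContinuousOn.circleIntegrable zero_le_one
  apply ContinuousOn.inv₀ (continuousOn_id.sub continuousOn_const)
  intro z hz h
  have hz1 : ‖z‖ = 1 := by
    rwa [mem_sphere_zero_iff_norm] at hz
  have : z = a := sub_eq_zero.mp h
  exact ha (this ▸ hz1)

lemma circleIntegrable_sum_inv (s : Multiset ℂ) (hs : ∀ r ∈ s, ‖r‖ ≠ 1) :
    CircleIntegrable (fun z => ((s.map fun r => (z - r)⁻¹)).sum) 0 1 :=
  ContinuousOn.circleIntegrable zero_le_one (contOn_sum_inv s hs)

lemma circleIntegral_inv_of_gt (a : ℂ) (ha : 1 < ‖a‖) :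
    (∮ z in C((0:ℂ), 1), (z - a)⁻¹) = 0 := by
  apply Complex.circleIntegral_eq_zero_of_differentiable_on_off_countable zero_le_one
    Set.countable_empty
  · apply ContinuousOn.inv₀ (continuousOn_id.sub continuousOn_const)
    intro z hz h
    have hz1 : ‖z‖ ≤ 1 := by
      rwa [Metric.mem_closedBall, Complex.dist_eq, sub_zero] at hz
    have : z = a := sub_eq_zero.mp h
    subst this
    linarith
  · intro z hz
    have hz' : ‖z‖ < 1 := by
      have h2 := hz.1
      rwa [Metric.mem_ball, Complex.dist_eq, sub_zero] at h2
    apply DifferentiableAt.inv (differentiableAt_id.sub_const a)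
    intro h
    have : z = a := sub_eq_zero.mp h
    subst this
    linarith

lemma circleIntegral_sum_inv_eq (t : Multiset ℂ) (ht : ∀ r ∈ t, ‖r‖ ≠ 1) :
    (∮ z in C((0:ℂ), 1), ((t.map (fun r => (z - r)⁻¹)).sum))
      = 2 * Real.pi * I * (((t.filter (fun r => ‖r‖ < 1)).card : ℕ) : ℂ) := by
  induction t using Multiset.induction with
  | empty => simp [circleIntegral]
  | cons a s ih =>
    have ha := ht a (Multiset.mem_cons_self a s)
    have hts : ∀ r ∈ s, ‖r‖ ≠ 1 := fun r hr => ht r (Multiset.mem_cons_of_mem hr)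
    have h1 : (∮ z in C((0:ℂ), 1), ((Multiset.map (fun r => (z - r)⁻¹) (a ::ₘ s)).sum))
        = (∮ z in C((0:ℂ), 1), (z - a)⁻¹)
          + ∮ z in C((0:ℂ), 1), ((Multiset.map (fun r => (z - r)⁻¹) s).sum) := by
      rw [← circleIntegral_add' _ _ (circleIntegrable_inv_off a ha)
        (circleIntegrable_sum_inv s hts)]
      apply circleIntegral.integral_congr zero_le_one
      intro z _
      simp [Multiset.map_cons, Multiset.sum_cons]
    rw [h1, ih hts]
    rcases lt_or_gt_of_ne ha with hlt | hgt
    · rw [circleIntegral.integral_sub_inv_of_mem_ball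
        (by rwa [Metric.mem_ball, Complex.dist_eq, sub_zero])]
      rw [Multiset.filter_cons_of_pos (p := fun r => ‖r‖ < 1) _ hlt]
      rw [Multiset.card_cons]
      push_cast
      ring
    · rw [circleIntegral_inv_of_gt a hgt,
        Multiset.filter_cons_of_neg (p := fun r => ‖r‖ < 1) _ (by exact not_lt.mpr (le_of_lt hgt))]
      ring

/-- Argument principle for polynomials on the unit circle. -/
lemma circleIntegral_logDeriv (p : Polynomial ℂ) (hp : p ≠ 0)
    (hcirc : ∀ z : ℂ, ‖z‖ = 1 → p.eval z ≠ 0) :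
    (∮ z in C((0:ℂ), 1), p.derivative.eval z / p.eval z)
      = 2 * Real.pi * I * (((p.roots.filter (fun z => ‖z‖ < 1)).card : ℕ) : ℂ) := by
  have hroots_off : ∀ r ∈ p.roots, ‖r‖ ≠ 1 := by
    intro r hr h1
    exact hcirc r h1 (Polynomial.isRoot_of_mem_roots hr)
  have hcongr : Set.EqOn (fun z => p.derivative.eval z / p.eval z)
      (fun z => ((p.roots.map (fun r => (z - r)⁻¹)).sum)) (Metric.sphere (0:ℂ) 1) := by
    intro z hz
    have hz1 : ‖z‖ = 1 := by
      rwa [mem_sphere_zero_iff_norm] at hz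
    have hpz := hcirc z hz1
    simp only
    rw [eval_derivative_of_roots p hp z hpz, mul_div_assoc, div_self hpz, mul_one]
  rw [circleIntegral.integral_congr zero_le_one hcongr]
  exact circleIntegral_sum_inv_eq p.roots hroots_off

/-- If `g/S` maps the unit circle into the right half plane, the log-derivative winding
integrals agree. -/
lemma circleIntegral_logDeriv_eq (g S : Polynomial ℂ)
    (hgne : ∀ z : ℂ, ‖z‖ = 1 → g.eval z ≠ 0)
    (hSne : ∀ z : ℂ, ‖z‖ = 1 → S.eval z ≠ 0)
    (hre : ∀ z : ℂ, ‖z‖ = 1 → 0 < (g.eval z / S.eval z).re) :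
    (∮ z in C((0:ℂ), 1), g.derivative.eval z / g.eval z)
      = ∮ z in C((0:ℂ), 1), S.derivative.eval z / S.eval z := by
  set γ : ℝ → ℂ := circleMap 0 1 with hγ
  have habs : ∀ t, ‖γ t‖ = 1 := by
    intro t
    rw [hγ, norm_circleMap_zero]
    norm_num
  set A : ℝ → ℂ := fun t => g.eval (γ t) with hA
  set B : ℝ → ℂ := fun t => S.eval (γ t) with hB
  have hAne : ∀ t, A t ≠ 0 := fun t => hgne (γ t) (habs t)
  have hBne : ∀ t, B t ≠ 0 := fun t => hSne (γ t) (habs t)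
  set q : ℝ → ℂ := fun t => A t / B t with hq
  have hqre : ∀ t, 0 < (q t).re := fun t => hre (γ t) (habs t)
  have hqne : ∀ t, q t ≠ 0 := fun t => div_ne_zero (hAne t) (hBne t)
  -- derivatives
  have hAd : ∀ t, HasDerivAt A (g.derivative.eval (γ t) * (γ t * I)) t := by
    intro t
    exact (Polynomial.hasDerivAt g (γ t)).comp t (hasDerivAt_circleMap 0 1 t)
  have hBd : ∀ t, HasDerivAt B (S.derivative.eval (γ t) * (γ t * I)) t := by
    intro t
    exact (Polynomial.hasDerivAt S (γ t)).comp t (hasDerivAt_circleMap 0 1 t)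
  set v : ℝ → ℂ := fun t =>
    (g.derivative.eval (γ t) * (γ t * I) * B t - A t * (S.derivative.eval (γ t) * (γ t * I)))
      / (B t) ^ 2 with hv
  have hqd : ∀ t, HasDerivAt q (v t) t := fun t => (hAd t).div (hBd t) (hBne t)
  have hlogd : ∀ t, HasDerivAt (fun u => Complex.log (q u)) ((q t)⁻¹ * v t) t := by
    intro t
    have hslit : q t ∈ Complex.slitPlane := Complex.mem_slitPlane_iff.mpr (Or.inl (hqre t))
    exact (Complex.hasDerivAt_log hslit).comp t (hqd t)
  -- continuity
  have hγc : Continuous γ := continuous_circleMap 0 1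
  have hAc : Continuous A := (Polynomial.continuous g).comp hγc
  have hBc : Continuous B := (Polynomial.continuous S).comp hγc
  have hA'c : Continuous fun t => g.derivative.eval (γ t) :=
    (Polynomial.continuous g.derivative).comp hγc
  have hB'c : Continuous fun t => S.derivative.eval (γ t) :=
    (Polynomial.continuous S.derivative).comp hγc
  have hqc : Continuous q := hAc.div hBc hBne
  have hvc : Continuous v := by
    apply Continuous.div
    · exact ((hA'c.mul ((hγc.mul continuous_const))).mul hBc).sub
        (hAc.mul (hB'c.mul (hγc.mul continuous_const)))
    · exact hBc.pow 2
    · exact fun t => pow_ne_zero 2 (hBne t)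
  have hintc : Continuous fun t => (q t)⁻¹ * v t := (hqc.inv₀ hqne).mul hvc
  -- the integral of the log derivative vanishes
  have hkey : (∫ t in (0:ℝ)..(2 * Real.pi), (q t)⁻¹ * v t) = 0 := by
    rw [intervalIntegral.integral_eq_sub_of_hasDerivAt (fun t _ => hlogd t)
      (hintc.intervalIntegrable 0 (2 * Real.pi))]
    have hper : γ (2 * Real.pi) = γ 0 := by
      have := periodic_circleMap 0 1
      simpa using this 0
    simp only [hq, hA, hB, hper]
    exact sub_self _
  -- express both circle integrals as interval integrals
  have hXc : Continuous fun t => (γ t * I) * (g.derivative.eval (γ t) / A t) :=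
    (hγc.mul continuous_const).mul (hA'c.div hAc hAne)
  have hYc : Continuous fun t => (γ t * I) * (S.derivative.eval (γ t) / B t) :=
    (hγc.mul continuous_const).mul (hB'c.div hBc hBne)
  have hgint : (∮ z in C((0:ℂ), 1), g.derivative.eval z / g.eval z)
      = ∫ t in (0:ℝ)..(2 * Real.pi), (γ t * I) * (g.derivative.eval (γ t) / A t) := by
    simp only [circleIntegral, deriv_circleMap, smul_eq_mul, hγ, hA]
  have hSint : (∮ z in C((0:ℂ), 1), S.derivative.eval z / S.eval z)
      = ∫ t in (0:ℝ)..(2 * Real.pi), (γ t * I) * (S.derivative.eval (γ t) / B t) := by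
    simp only [circleIntegral, deriv_circleMap, smul_eq_mul, hγ, hB]
  rw [hgint, hSint, ← sub_eq_zero, ← intervalIntegral.integral_sub
    (hXc.intervalIntegrable 0 (2 * Real.pi)) (hYc.intervalIntegrable 0 (2 * Real.pi))]
  rw [← hkey]
  apply intervalIntegral.integral_congr
  intro t _
  simp only [hv, hq]
  field_simp [hAne t, hBne t]

/-- The core counting theorem: a "self-inversive up to rotation" polynomial with no
zeros on the unit circle has `natDegree S + natTrailingDegree S = 2n` and exactly
`n` roots in the disk, whence its derivative has exactly `n - 1` roots in the disk. -/
theorem core (n : ℕ) (hn : 1 ≤ n) (S : Polynomial ℂ) (ω : ℂ) (hω : ω ≠ 0)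
    (hdeg : S.natDegree ≤ 2 * n)
    (hSym : nInv (2 * n) S = C ω * S)
    (hcirc : ∀ z : ℂ, ‖z‖ = 1 → S.eval z ≠ 0) :
    (S.derivative.roots.filter (fun z => ‖z‖ < 1)).card = n - 1 := by
  have hS0 : S ≠ 0 := by
    intro h
    exact hcirc 1 (by simp) (by simp [h])
  have hco : ∀ k, k ≤ 2 * n → conj' (S.coeff (2 * n - k)) = ω * S.coeff k := by
    intro k hk
    have h := congrArg (fun p : Polynomial ℂ => p.coeff k) hSym
    simpa [coeff_nInv, Polynomial.revAt_le hk, Polynomial.coeff_C_mul] using h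
  set d := S.natDegree with hd
  set m := S.natTrailingDegree with hm
  have hmd : m ≤ d := Polynomial.natTrailingDegree_le_natDegree S
  have hlc : S.coeff d ≠ 0 := by
    rw [hd, Polynomial.coeff_natDegree]
    exact Polynomial.leadingCoeff_ne_zero.mpr hS0
  have htc : S.coeff m ≠ 0 := by
    rw [hm]
    exact Polynomial.trailingCoeff_nonzero_iff_nonzero.mpr hS0
  have h1 : S.coeff (2 * n - d) ≠ 0 := by
    intro h
    have h2 := hco d hdeg
    rw [h, map_zero] at h2
    exact mul_ne_zero hω hlc h2.symm
  have hm_le : m ≤ 2 * n - d := Polynomial.natTrailingDegree_le_of_ne_zero h1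
  have h2 : S.coeff (2 * n - m) ≠ 0 := by
    have h3 := hco (2 * n - m) (by omega)
    rw [show 2 * n - (2 * n - m) = m by omega] at h3
    intro h
    rw [h, mul_zero] at h3
    exact htc (by simpa using h3)
  have hd_ge : 2 * n - m ≤ d := Polynomial.le_natDegree_of_ne_zero h2
  have hdm : d + m = 2 * n := by omega
  -- root counting for S
  have hcard : Multiset.card S.roots = d :=
    Polynomial.splits_iff_card_roots.mp (IsAlgClosed.splits S)
  have hcount0 : S.roots.count 0 = m := by
    rw [Polynomial.count_roots, Polynomial.rootMultiplicity_eq_natTrailingDegree']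
  have hoff : ∀ r ∈ S.roots, ‖r‖ ≠ 1 := fun r hr h1 =>
    hcirc r h1 (Polynomial.isRoot_of_mem_roots hr)
  have hpair : ∀ w : ℂ, w ≠ 0 → S.roots.count w = S.roots.count ((conj' w)⁻¹) := by
    intro w hw
    rw [Polynomial.count_roots, Polynomial.count_roots]
    exact rootMultiplicity_inv_eq S hS0 (2 * n) hdeg ω hω hSym w hw
  set φ : ℂ → ℂ := fun z => (conj' z)⁻¹ with hφ
  have hφinv : Function.Involutive φ := by
    intro z
    simp [hφ, map_inv₀]
  have hφinj := hφinv.injective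
  have hmapeq : (S.roots.filter (fun z => 1 < ‖z‖)).map φ
      = S.roots.filter (fun z => ‖z‖ < 1 ∧ z ≠ 0) := by
    refine Multiset.ext.mpr fun w => ?_
    rw [Multiset.count_filter]
    conv_lhs => rw [show w = φ (φ w) from (hφinv w).symm]
    rw [Multiset.count_map_eq_count' φ _ hφinj, Multiset.count_filter]
    by_cases h0 : w = 0
    · subst h0
      rw [show φ (0:ℂ) = 0 by simp [hφ]]
      norm_num
    · have hwpos : 0 < ‖w‖ := norm_pos_iff.mpr h0
      have habsφ : ‖φ w‖ = (‖w‖)⁻¹ := by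
        simp [hφ, map_inv₀]
      have hφw0 : φ w ≠ 0 := by simp [hφ, h0]
      have hiff : (1 < ‖φ w‖) ↔ (‖w‖ < 1 ∧ w ≠ 0) := by
        rw [habsφ]
        constructor
        · intro h
          refine ⟨?_, h0⟩
          by_contra hge
          push_neg at hge
          have : (‖w‖)⁻¹ ≤ 1 := inv_le_one_of_one_le₀ hge
          linarith
        · rintro ⟨h, _⟩
          rw [show (1:ℝ) = (1:ℝ)⁻¹ by norm_num]
          exact inv_strictAnti₀ hwpos h
      by_cases hc : ‖w‖ < 1 ∧ w ≠ 0
      · rw [if_pos (hiff.mpr hc), if_pos hc]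
        have h2 := hpair (φ w) hφw0
        rw [show (conj' (φ w))⁻¹ = w from hφinv w] at h2
        exact h2
      · rw [if_neg (fun hh => hc (hiff.mp hh)), if_neg hc]
  have hcnt : Multiset.card (S.roots.filter (fun z => 1 < ‖z‖))
      = Multiset.card (S.roots.filter (fun z => ‖z‖ < 1 ∧ z ≠ 0)) := by
    rw [← hmapeq, Multiset.card_map]
  have hsplit : Multiset.card (S.roots.filter (fun z => ‖z‖ < 1))
      + Multiset.card (S.roots.filter (fun z => ¬ ‖z‖ < 1)) = d := by
    rw [← Multiset.card_add, Multiset.filter_add_not]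
    exact hcard
  have hnotlt : S.roots.filter (fun z => ¬ ‖z‖ < 1)
      = S.roots.filter (fun z => 1 < ‖z‖) := by
    apply Multiset.filter_congr
    intro r hr
    constructor
    · intro h
      exact lt_of_le_of_ne (not_lt.mp h) (hoff r hr).symm
    · intro h
      exact not_lt.mpr (le_of_lt h)
  have hzero_split : S.roots.filter (fun z => ‖z‖ < 1)
      = Multiset.replicate m 0 + S.roots.filter (fun z => ‖z‖ < 1 ∧ z ≠ 0) := by
    refine Multiset.ext.mpr fun w => ?_
    rw [Multiset.count_add, Multiset.count_filter, Multiset.count_filter,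
      Multiset.count_replicate]
    by_cases h0 : w = 0
    · subst h0
      rw [if_pos (show ‖(0:ℂ)‖ < 1 by simp), if_pos (show (0:ℂ) = 0 from rfl),
        if_neg (show ¬(‖(0:ℂ)‖ < 1 ∧ (0:ℂ) ≠ 0) from fun hh => hh.2 rfl), hcount0]
      try omega
    · rw [if_neg (show ¬((0:ℂ) = w) from fun h => h0 h.symm)]
      by_cases hc : ‖w‖ < 1
      · rw [if_pos hc, if_pos (show ‖w‖ < 1 ∧ w ≠ 0 from ⟨hc, h0⟩)]
        try omega
      · rw [if_neg hc, if_neg (show ¬(‖w‖ < 1 ∧ w ≠ 0) from fun hh => hc hh.1)]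
        try omega
  have hA : Multiset.card (S.roots.filter (fun z => ‖z‖ < 1)) = n := by
    have hq1 := congrArg Multiset.card hzero_split
    rw [Multiset.card_add, Multiset.card_replicate] at hq1
    have e1 := congrArg Multiset.card hnotlt
    omega
  -- now the derivative
  have hnd : 1 ≤ d := by omega
  have hS'0 : Polynomial.derivative S ≠ 0 := by
    intro h
    have := Polynomial.natDegree_eq_zero_of_derivative_eq_zero h
    omega
  set g : Polynomial ℂ := X * Polynomial.derivative S with hg
  have hg0 : g ≠ 0 := mul_ne_zero Polynomial.X_ne_zero hS'0
  have hzconj : ∀ z : ℂ, ‖z‖ = 1 → z * conj' z = 1 := by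
    intro z hz
    rw [Complex.mul_conj, Complex.normSq_eq_norm_sq, hz]
    norm_num
  have hz0' : ∀ z : ℂ, ‖z‖ = 1 → z ≠ 0 := by
    intro z hz h
    rw [h] at hz
    simp at hz
  have he1 : ∀ z : ℂ, ‖z‖ = 1 →
      z ^ (2 * n) * conj' (S.eval z) = ω * S.eval z := by
    intro z hz
    have h := congrArg (fun p : Polynomial ℂ => p.eval z) hSym
    simp only [Polynomial.eval_mul, Polynomial.eval_C] at h
    rw [nInv_eval_circle (2 * n) S hdeg z (hzconj z hz)] at h
    exact h
  have hDer := nInv_derivative n hn S ω hdeg hSym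
  have hdS' : (Polynomial.derivative S).natDegree ≤ 2 * n - 1 :=
    le_trans (Polynomial.natDegree_derivative_le S) (by omega)
  have he2 : ∀ z : ℂ, ‖z‖ = 1 →
      z ^ (2 * n - 1) * conj' ((Polynomial.derivative S).eval z)
        = ω * (((2 * n : ℕ) : ℂ) * S.eval z - z * (Polynomial.derivative S).eval z) := by
    intro z hz
    have h := congrArg (fun p : Polynomial ℂ => p.eval z) hDer
    simp only [Polynomial.eval_mul, Polynomial.eval_sub, Polynomial.eval_C,
      Polynomial.eval_X] at h
    rw [nInv_eval_circle (2 * n - 1) _ hdS' z (hzconj z hz)] at h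
    exact h
  have hkeyRe : ∀ z : ℂ, ‖z‖ = 1 →
      z * (Polynomial.derivative S).eval z * conj' (S.eval z)
        + conj' (z * (Polynomial.derivative S).eval z) * S.eval z
      = ((2 * n : ℕ) : ℂ) * (S.eval z * conj' (S.eval z)) := by
    intro z hz
    set a := S.eval z
    set b := (Polynomial.derivative S).eval z
    apply mul_left_cancel₀ (pow_ne_zero (2 * n) (hz0' z hz))
    have hzz := hzconj z hz
    have hz2n : z ^ (2 * n) = z ^ (2 * n - 1) * z := by
      rw [← pow_succ]
      congr 1
      omega
    calc z ^ (2 * n) * (z * b * conj' a + conj' (z * b) * a)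
        = (z ^ (2 * n) * conj' a) * (z * b)
          + (z ^ (2 * n - 1) * conj' b) * ((z * conj' z) * a) := by
          rw [map_mul, hz2n]
          ring
      _ = (ω * a) * (z * b) + (ω * (((2 * n : ℕ) : ℂ) * a - z * b)) * (1 * a) := by
          rw [he1 z hz, he2 z hz, hzz]
      _ = z ^ (2 * n) * (((2 * n : ℕ) : ℂ) * (a * conj' a)) := by
          rw [show z ^ (2 * n) * (((2 * n : ℕ) : ℂ) * (a * conj' a))
              = ((2 * n : ℕ) : ℂ) * ((z ^ (2 * n) * conj' a) * a) by ring, he1 z hz]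
          ring
  have hwre : ∀ z : ℂ, ‖z‖ = 1 →
      (z * (Polynomial.derivative S).eval z * conj' (S.eval z)).re
        = (2 * n : ℝ) * Complex.normSq (S.eval z) / 2 := by
    intro z hz
    have h := hkeyRe z hz
    have hrw : conj' (z * (Polynomial.derivative S).eval z) * S.eval z
        = conj' (z * (Polynomial.derivative S).eval z * conj' (S.eval z)) := by
      simp only [map_mul, Complex.conj_conj]
    rw [hrw, Complex.add_conj, Complex.mul_conj] at h
    have h3 : 2 * (z * (Polynomial.derivative S).eval z * conj' (S.eval z)).re
        = (2 * n : ℝ) * Complex.normSq (S.eval z) := by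
      exact_mod_cast h
    linarith
  have hbne : ∀ z : ℂ, ‖z‖ = 1 → (Polynomial.derivative S).eval z ≠ 0 := by
    intro z hz h
    have h2 := hwre z hz
    rw [h] at h2
    simp only [mul_zero, zero_mul, Complex.zero_re] at h2
    have hpos := Complex.normSq_pos.mpr (hcirc z hz)
    have hn' : (1 : ℝ) ≤ n := by exact_mod_cast hn
    nlinarith
  have hgne : ∀ z : ℂ, ‖z‖ = 1 → g.eval z ≠ 0 := by
    intro z hz
    rw [hg, Polynomial.eval_mul, Polynomial.eval_X]
    exact mul_ne_zero (hz0' z hz) (hbne z hz)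
  have hgre : ∀ z : ℂ, ‖z‖ = 1 → 0 < (g.eval z / S.eval z).re := by
    intro z hz
    have ha := hcirc z hz
    have hdivre : ∀ x y : ℂ, (x / y).re = (x * conj' y).re / Complex.normSq y := by
      intro x y
      rw [Complex.div_re, Complex.mul_re, Complex.conj_re, Complex.conj_im]
      ring
    rw [hg, Polynomial.eval_mul, Polynomial.eval_X, hdivre, hwre z hz]
    have hpos := Complex.normSq_pos.mpr ha
    have hn' : (1 : ℝ) ≤ n := by exact_mod_cast hn
    positivity
  have hc1 := circleIntegral_logDeriv S hS0 hcirc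
  have hc2 := circleIntegral_logDeriv g hg0 hgne
  have hc3 := circleIntegral_logDeriv_eq g S hgne hcirc hgre
  rw [hc1, hc2] at hc3
  have h2pi : (2 * (Real.pi : ℂ) * I : ℂ) ≠ 0 := by
    simp [Real.pi_ne_zero, Complex.I_ne_zero]
  have hcast : (((g.roots.filter (fun z => ‖z‖ < 1)).card : ℕ) : ℂ)
      = (((S.roots.filter (fun z => ‖z‖ < 1)).card : ℕ) : ℂ) :=
    mul_left_cancel₀ h2pi hc3
  have hnat : (g.roots.filter (fun z => ‖z‖ < 1)).card
      = (S.roots.filter (fun z => ‖z‖ < 1)).card := by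
    exact_mod_cast hcast
  have hgroots : g.roots = 0 ::ₘ (Polynomial.derivative S).roots := by
    rw [hg, Polynomial.roots_mul (show (X : Polynomial ℂ) * Polynomial.derivative S ≠ 0 from hg ▸ hg0), Polynomial.roots_X, Multiset.singleton_add]
  rw [hgroots, Multiset.filter_cons_of_pos (p := fun z => ‖z‖ < 1) _ (by simp),
    Multiset.card_cons] at hnat
  rw [hA] at hnat
  omega

lemma mul_conj_one_of_abs_one (z : ℂ) (hz : ‖z‖ = 1) :
    z * (starRingEnd ℂ) z = 1 := by
  rw [Complex.mul_conj, Complex.normSq_eq_norm_sq, hz]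
  norm_num

lemma uexp_pi : uexp Real.pi = -1 := by
  rw [uexp, mul_comm]
  exact_mod_cast Complex.exp_pi_mul_I

end Stmt13Aux

end

open Stmt13Aux

theorem stmt13 (n : ℕ) (hn : 1 ≤ n) (lam : ℝ) (h0 : 0 < lam) (h1 : lam < 2 * Real.pi / n)
    (P Q : Polynomial ℂ)
    (hP : P ∈ polyOn n {z : ℂ | ‖z‖ = 1})
    (hQ : Q ∈ polyOn n {z : ℂ | ‖z‖ = 1})
    (cP cQ : ℂ) (tP tQ : ℝ)
    (htP : 0 ≤ tP ∧ tP < Real.pi) (hcP : cP = uexp tP)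
    (hsP : nInv n (C cP * P) = C cP * P)
    (htQ : 0 ≤ tQ ∧ tQ < Real.pi) (hcQ : cQ = uexp tQ)
    (hsQ : nInv n (C cQ * Q) = C cQ * Q)
    (hcc : cP ≠ cQ)
    (F S T : Polynomial ℂ) (hF : F = P - Q)
    (hS : S = plusPoly lam P * minusPoly lam Q - minusPoly lam P * plusPoly lam Q)
    (hT : T = plusPoly lam F * minusPoly lam (nInv n F) -
      minusPoly lam F * plusPoly lam (nInv n F))
    (hmem : F ∈ Dset n lam \ Tstrict n lam) :
    (S.derivative.roots.filter (fun z => ‖z‖ < 1)).card = n - 1 ∧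
    (T.derivative.roots.filter (fun z => ‖z‖ < 1)).card = n - 1 := by
  obtain ⟨hPdeg, hProots⟩ := hP
  obtain ⟨hQdeg, hQroots⟩ := hQ
  have hcPu : cP * (starRingEnd ℂ) cP = 1 := by rw [hcP]; exact uexp_mul_conj tP
  have hcQu : cQ * (starRingEnd ℂ) cQ = 1 := by rw [hcQ]; exact uexp_mul_conj tQ
  have hcP0 : cP ≠ 0 := by rw [hcP]; exact uexp_ne_zero tP
  have hcQ0 : cQ ≠ 0 := by rw [hcQ]; exact uexp_ne_zero tQ
  -- self-inversiveness of P and Q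
  have hPself : nInv n P = C (cP ^ 2) * P := by
    have h1 := hsP
    rw [nInv_C_mul] at h1
    calc nInv n P = C (cP * (starRingEnd ℂ) cP) * nInv n P := by
          rw [hcPu, map_one, one_mul]
      _ = C cP * (C ((starRingEnd ℂ) cP) * nInv n P) := by rw [map_mul, mul_assoc]
      _ = C cP * (C cP * P) := by rw [h1]
      _ = C (cP ^ 2) * P := by rw [← mul_assoc, ← map_mul, sq]
  have hQself : nInv n Q = C (cQ ^ 2) * Q := by
    have h1 := hsQ
    rw [nInv_C_mul] at h1
    calc nInv n Q = C (cQ * (starRingEnd ℂ) cQ) * nInv n Q := by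
          rw [hcQu, map_one, one_mul]
      _ = C cQ * (C ((starRingEnd ℂ) cQ) * nInv n Q) := by rw [map_mul, mul_assoc]
      _ = C cQ * (C cQ * Q) := by rw [h1]
      _ = C (cQ ^ 2) * Q := by rw [← mul_assoc, ← map_mul, sq]
  have hGF : nInv n F = C (cP ^ 2) * P - C (cQ ^ 2) * Q := by
    rw [hF, nInv_sub, hPself, hQself]
  have hTS : T = C (cP ^ 2 - cQ ^ 2) * S := by
    rw [hT, hGF, hF, hS]
    exact T_eq_lemma lam (cP ^ 2) (cQ ^ 2) P Q
  -- cP² ≠ cQ²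
  have hcc2 : cP ^ 2 - cQ ^ 2 ≠ 0 := by
    intro h
    have hfac : (cP - cQ) * (cP + cQ) = 0 := by linear_combination h
    have h2 : cP = -cQ := by
      rcases mul_eq_zero.mp hfac with h3 | h3
      · exact absurd (sub_eq_zero.mp h3) hcc
      · exact eq_neg_of_add_eq_zero_left h3
    rw [hcP, hcQ] at h2
    have hneg : uexp tP = uexp (tQ + Real.pi) := by
      calc uexp tP = -uexp tQ := h2
        _ = uexp tQ * uexp Real.pi := by rw [uexp_pi]; ring
        _ = uexp (tQ + Real.pi) := uexp_mul_uexp tQ Real.pi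
    have hexp1 : Complex.exp (Complex.I * tP - Complex.I * (tQ + Real.pi)) = 1 := by
      rw [Complex.exp_sub]
      rw [uexp] at hneg
      rw [show Complex.exp (Complex.I * ((tQ : ℂ) + (Real.pi : ℂ)))
          = uexp (tQ + Real.pi) by rw [uexp]; push_cast; ring_nf]
      rw [hneg]
      exact div_self (Complex.exp_ne_zero _)
    obtain ⟨k, hk⟩ := Complex.exp_eq_one_iff.mp hexp1
    have hreal : tP - (tQ + Real.pi) = k * (2 * Real.pi) := by
      have h5 : Complex.I * ((tP : ℂ) - ((tQ : ℝ) + Real.pi : ℝ))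
          = Complex.I * ((k * (2 * Real.pi) : ℝ) : ℂ) := by
        push_cast at hk ⊢
        linear_combination hk
      have h6 := mul_left_cancel₀ Complex.I_ne_zero h5
      exact_mod_cast h6
    have hπ := Real.pi_pos
    have hb1 : (k : ℝ) * (2 * Real.pi) < 0 := by
      rw [← hreal]
      have := htP.2
      have := htQ.1
      linarith
    have hb2 : -(2 * Real.pi) < (k : ℝ) * (2 * Real.pi) := by
      rw [← hreal]
      have := htP.1
      have := htQ.2
      linarith
    have hk1 : (k : ℝ) < 0 := by nlinarith
    have hk2 : (-1 : ℝ) < (k : ℝ) := by nlinarith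
    have : (-1 : ℤ) < k ∧ k < 0 := ⟨by exact_mod_cast hk2, by exact_mod_cast hk1⟩
    omega
  -- unpack Dset membership
  have hlam0 : lam ≠ 0 := ne_of_gt h0
  obtain ⟨hmem1, hmem2⟩ := hmem
  have hmem1' : F.natDegree = n ∧ ∀ z : ℂ, 1 ≤ ‖z‖ →
      0 < (dQuot n lam F z).im := by
    rcases hmem1 with h | h
    · exact absurd h hmem2
    · rw [if_neg hlam0] at h
      exact h
  obtain ⟨hFdeg, hFpos⟩ := hmem1'
  have hFdeg_le : F.natDegree ≤ n := le_of_eq hFdeg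
  -- S does not vanish on the unit circle
  have hcircS : ∀ z : ℂ, ‖z‖ = 1 → S.eval z ≠ 0 := by
    intro z hz
    have hz1 : 1 ≤ ‖z‖ := le_of_eq hz.symm
    have hzne : z ≠ 0 := by
      intro h
      rw [h] at hz
      simp at hz
    have hpos := hFpos z hz1
    have hFm : F.eval (uexp (-(lam / 2)) * z) ≠ 0 := by
      intro h
      rw [dQuot, h, div_zero] at hpos
      simp at hpos
    have hFp : F.eval (uexp (lam / 2) * z) ≠ 0 := by
      intro h
      rw [dQuot, h, mul_zero, zero_div] at hpos
      simp at hpos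
    have habs_m : ‖uexp (-(lam / 2)) * z‖ = 1 := by
      rw [norm_mul, abs_uexp, hz, one_mul]
    have habs_p : ‖uexp (lam / 2) * z‖ = 1 := by
      rw [norm_mul, abs_uexp, hz, one_mul]
    set w : ℂ := uexp (-(lam / 2)) ^ n * F.eval (uexp (lam / 2) * z) *
      (starRingEnd ℂ) (F.eval (uexp (-(lam / 2)) * z)) with hw
    have hTeval : T.eval z = z ^ n * (w - (starRingEnd ℂ) w) := by
      have e1 : (nInv n F).eval (uexp (-(lam / 2)) * z)
          = (uexp (-(lam / 2)) * z) ^ n *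
            (starRingEnd ℂ) (F.eval (uexp (-(lam / 2)) * z)) :=
        nInv_eval_circle n F hFdeg_le _ (mul_conj_one_of_abs_one _ habs_m)
      have e2 : (nInv n F).eval (uexp (lam / 2) * z)
          = (uexp (lam / 2) * z) ^ n *
            (starRingEnd ℂ) (F.eval (uexp (lam / 2) * z)) :=
        nInv_eval_circle n F hFdeg_le _ (mul_conj_one_of_abs_one _ habs_p)
      have hcw : (starRingEnd ℂ) w = uexp (lam / 2) ^ n *
          (starRingEnd ℂ) (F.eval (uexp (lam / 2) * z)) *
          F.eval (uexp (-(lam / 2)) * z) := by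
        rw [hw]
        simp only [map_mul, map_pow, conj_uexp, Complex.conj_conj, neg_neg]
      rw [hT, Polynomial.eval_sub, Polynomial.eval_mul, Polynomial.eval_mul,
        plusPoly_eval, minusPoly_eval, plusPoly_eval, minusPoly_eval, e1, e2, hcw, hw]
      rw [mul_pow, mul_pow]
      ring
    have hw_eq : w = dQuot n lam F z *
        (F.eval (uexp (-(lam / 2)) * z) *
          (starRingEnd ℂ) (F.eval (uexp (-(lam / 2)) * z))) := by
      rw [hw, dQuot]
      rw [show uexp (-(↑n * lam) / 2) = uexp (-(lam / 2)) ^ n by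
        rw [uexp_pow]; congr 1; push_cast; ring]
      rw [div_mul_eq_mul_div]
      rw [mul_comm (F.eval (uexp (-(lam / 2)) * z))
        ((starRingEnd ℂ) (F.eval (uexp (-(lam / 2)) * z)))]
      rw [← mul_assoc, mul_div_cancel_right₀ _ hFm]
    have hwim : 0 < w.im := by
      rw [hw_eq, Complex.mul_conj]
      rw [show (dQuot n lam F z * ((Complex.normSq (F.eval (uexp (-(lam / 2)) * z)) : ℝ) : ℂ)).im
          = (dQuot n lam F z).im * Complex.normSq (F.eval (uexp (-(lam / 2)) * z)) by
        rw [Complex.mul_im]; simp]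
      exact mul_pos hpos (Complex.normSq_pos.mpr hFm)
    have hwne : w - (starRingEnd ℂ) w ≠ 0 := by
      intro h
      have h2 : w = (starRingEnd ℂ) w := sub_eq_zero.mp h
      have h3 : w.im = -w.im := by
        conv_lhs => rw [h2]
        exact Complex.conj_im w
      linarith
    intro hSz
    have hTz : T.eval z = 0 := by
      rw [hTS, Polynomial.eval_mul, hSz, mul_zero]
    rw [hTeval] at hTz
    exact (mul_ne_zero (pow_ne_zero n hzne) hwne) hTz
  -- symmetry of S and degree bound
  have hSymS : nInv (2 * n) S = C (cP ^ 2 * cQ ^ 2) * S := by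
    rw [hS]
    exact S_sym n lam P Q (le_of_eq hPdeg) (le_of_eq hQdeg) _ _ hPself hQself
  have hω : cP ^ 2 * cQ ^ 2 ≠ 0 :=
    mul_ne_zero (pow_ne_zero 2 hcP0) (pow_ne_zero 2 hcQ0)
  have hdegS : S.natDegree ≤ 2 * n := by
    rw [hS]
    refine le_trans (Polynomial.natDegree_sub_le _ _) (max_le ?_ ?_)
    · refine le_trans (Polynomial.natDegree_mul_le) ?_
      have b1 := le_trans (plusPoly_natDegree_le lam P) (le_of_eq hPdeg)
      have b2 := le_trans (minusPoly_natDegree_le lam Q) (le_of_eq hQdeg)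
      omega
    · refine le_trans (Polynomial.natDegree_mul_le) ?_
      have b1 := le_trans (minusPoly_natDegree_le lam P) (le_of_eq hPdeg)
      have b2 := le_trans (plusPoly_natDegree_le lam Q) (le_of_eq hQdeg)
      omega
  have main := core n hn S (cP ^ 2 * cQ ^ 2) hω hdegS hSymS hcircS
  refine ⟨main, ?_⟩
  have hT' : T.derivative = C (cP ^ 2 - cQ ^ 2) * S.derivative := by
    rw [hTS, Polynomial.derivative_C_mul]
  rw [hT', Polynomial.roots_C_mul _ hcc2]
  exact main
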